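/- Let U ∈ ℝ^{n×n} be orthogonal (UᵀU = I), let Λ = diag(τ₁,…,τ_n) with all τ_i ≥ 0, let α ≥ 0, let B, E ∈ ℝ^{n×p}, and set X = UB + E. Let Θ ∈ ℝ^{p×p} be symmetric positive definite and suppose: (i) Θ is diagonally dominant with ratio ρ, i.e., Σ_{j'≠j}|Θ_{j'j}| ≤ ρ·Θ_{jj} for all j with 0 ≤ ρ < 1, and (ii) there is k̄ ≥ 1 with 1/k̄ ≤ Θ_{jj} ≤ k̄ for all j. Let B̂₁ be the unique minimizer of B' ↦ tr((X − UB')ᵀ(X − UB')) + α·tr(B'ᵀΛB'), let B̂₂ be the unique minimizer of B' ↦ tr(Θ(X − UB')ᵀ(X − UB')) + α·tr(B'ᵀΛB'), and set W₁ = B − B̂₁ and W₂ = B − B̂₂. If W₂ ≠ 0, then there exists a matrix W̃ ∈ ℝ^{n×p} such that (1 − ρ)/k̄ ≤ ‖W̃‖_∞/‖W₂‖_∞ ≤ (1 + ρ)·k̄ and W̃ − W₁ = (I + αΛ)^{−1}UᵀE(I − Θ). -/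

import Mathlib

open Matrix Finset

/-- The maximum absolute entry norm `‖M‖_∞ = max_{ij} |M_{ij}|` of a matrix. -/
noncomputable def maxAbsEntry {n p : ℕ} (M : Matrix (Fin n) (Fin p) ℝ) : ℝ :=
  ⨆ i, ⨆ j, |M i j|

lemma quad_zero (a b : ℝ) (h : ∀ t : ℝ, 0 ≤ a * t + b * t ^ 2) : a = 0 := by
  by_contra ha
  have hb : (0:ℝ) < |b| + 1 := by positivity
  set c : ℝ := (|b| + 1)⁻¹ with hcdef
  have hc : 0 < c := inv_pos.mpr hb
  have hcc : (|b| + 1) * c = 1 := mul_inv_cancel₀ hb.ne'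
  have hbc : b * c < 1 := by nlinarith [le_abs_self b]
  have ht := h (-a * c)
  have ha2 : 0 < a ^ 2 := by positivity
  have hpos : 0 < a ^ 2 * c * (1 - b * c) := by nlinarith [mul_pos (mul_pos ha2 hc) (sub_pos.mpr hbc)]
  nlinarith [ht, hpos]

lemma trace_std {n p : ℕ} (M : Matrix (Fin n) (Fin p) ℝ) (i : Fin n) (j : Fin p) :
    ((Matrix.single i j (1:ℝ))ᵀ * M).trace = M i j := by
  simp [Matrix.trace, Matrix.diag, Matrix.mul_apply, Matrix.single, Matrix.transpose_apply, ite_and, Finset.sum_ite_eq]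

lemma normal_eq {n p : ℕ} (U : Matrix (Fin n) (Fin n) ℝ)
    (τ : Fin n → ℝ) (α : ℝ) (X Bh : Matrix (Fin n) (Fin p) ℝ)
    (Θ : Matrix (Fin p) (Fin p) ℝ) (hΘs : Θᵀ = Θ)
    (hmin : ∀ B' : Matrix (Fin n) (Fin p) ℝ,
      (Θ * (X - U * Bh)ᵀ * (X - U * Bh)).trace + α * (Bhᵀ * Matrix.diagonal τ * Bh).trace
      ≤ (Θ * (X - U * B')ᵀ * (X - U * B')).trace + α * (B'ᵀ * Matrix.diagonal τ * B').trace) :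
    Uᵀ * (X - U * Bh) * Θ = α • (Matrix.diagonal τ * Bh) := by
  set Λ := Matrix.diagonal τ with hΛ
  set R := X - U * Bh with hR
  have key : ∀ D : Matrix (Fin n) (Fin p) ℝ,
      (Dᵀ * (Uᵀ * R * Θ)).trace = α * (Dᵀ * (Λ * Bh)).trace := by
    intro D
    set V := U * D with hV
    have h1 : (Θ * Vᵀ * R).trace = (Dᵀ * (Uᵀ * R * Θ)).trace := by
      rw [hV, Matrix.transpose_mul, Matrix.mul_assoc, trace_mul_comm]
      simp only [Matrix.mul_assoc]
    have h2 : (Θ * Rᵀ * V).trace = (Dᵀ * (Uᵀ * R * Θ)).trace := by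
      rw [← Matrix.trace_transpose (Θ * Rᵀ * V)]
      simp only [Matrix.transpose_mul, Matrix.transpose_transpose, hΘs, hV, Matrix.mul_assoc]
    have h3 : (Bhᵀ * Λ * D).trace = (Dᵀ * (Λ * Bh)).trace := by
      rw [← Matrix.trace_transpose (Bhᵀ * Λ * D)]
      simp only [Matrix.transpose_mul, Matrix.transpose_transpose, hΛ, Matrix.diagonal_transpose,
        Matrix.mul_assoc]
    have quad : ∀ t : ℝ,
        0 ≤ (2 * α * (Dᵀ * (Λ * Bh)).trace - 2 * (Dᵀ * (Uᵀ * R * Θ)).trace) * t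
            + ((Θ * Vᵀ * V).trace + α * (Dᵀ * Λ * D).trace) * t ^ 2 := by
      intro t
      have hm := hmin (Bh + t • D)
      have hsub : X - U * (Bh + t • D) = R - t • V := by
        rw [hR, hV, Matrix.mul_add, Matrix.mul_smul]
        abel
      rw [hsub] at hm
      simp only [Matrix.transpose_sub, Matrix.transpose_smul, Matrix.transpose_add,
        Matrix.mul_sub, Matrix.sub_mul, Matrix.mul_add, Matrix.add_mul, Matrix.smul_mul,
        Matrix.mul_smul, Matrix.trace_sub, Matrix.trace_add, Matrix.trace_smul, smul_eq_mul,
        smul_smul] at hm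
      rw [Matrix.mul_assoc Dᵀ Λ Bh] at hm
      rw [h1, h2, h3] at hm
      nlinarith [hm]
    have := quad_zero _ _ quad
    linarith
  ext i j
  have h := key (Matrix.single i j 1)
  rw [trace_std, trace_std] at h
  simpa [Matrix.smul_apply] using h

lemma le_maxAbsEntry' {n p : ℕ} (M : Matrix (Fin n) (Fin p) ℝ) (i : Fin n) (j : Fin p) :
    |M i j| ≤ ⨆ i, ⨆ j, |M i j| := by
  have h1 : |M i j| ≤ ⨆ j', |M i j'| :=
    le_ciSup (f := fun j' => |M i j'|) (Set.Finite.bddAbove (Set.finite_range _)) j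
  exact h1.trans (le_ciSup (f := fun i' => ⨆ j', |M i' j'|)
    (Set.Finite.bddAbove (Set.finite_range _)) i)

lemma maxAbsEntry_le' {n p : ℕ} [Nonempty (Fin n)] [Nonempty (Fin p)]
    (M : Matrix (Fin n) (Fin p) ℝ) {c : ℝ} (h : ∀ i j, |M i j| ≤ c) :
    (⨆ i, ⨆ j, |M i j|) ≤ c :=
  ciSup_le fun i => ciSup_le fun j => h i j

lemma eq_of_sub_eq_sub' {A : Type*} [AddCommGroup A] {a b c d : A}
    (h : c = d) (h2 : a - b = c - d) : a = b := by
  rw [h, sub_self, sub_eq_zero] at h2; exact h2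

set_option maxHeartbeats 1600000 in
theorem oracle_mean_estimation
    (n p : ℕ) (U : Matrix (Fin n) (Fin n) ℝ) (hU : Uᵀ * U = 1)
    (τ : Fin n → ℝ) (hτ : ∀ i, 0 ≤ τ i) (α : ℝ) (hα : 0 ≤ α)
    (B E : Matrix (Fin n) (Fin p) ℝ)
    (Θ : Matrix (Fin p) (Fin p) ℝ) (hΘ : Θ.PosDef)
    (ρ : ℝ) (hρ₀ : 0 ≤ ρ) (hρ₁ : ρ < 1)
    (hdom : ∀ j, ∑ j' ∈ Finset.univ.erase j, |Θ j' j| ≤ ρ * Θ j j)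
    (kbar : ℝ) (hkbar : 1 ≤ kbar) (hdiag : ∀ j, 1 / kbar ≤ Θ j j ∧ Θ j j ≤ kbar)
    (Bhat₁ Bhat₂ : Matrix (Fin n) (Fin p) ℝ)
    (hBhat₁ : ∀ B' : Matrix (Fin n) (Fin p) ℝ,
      (((U * B + E) - U * Bhat₁)ᵀ * ((U * B + E) - U * Bhat₁)).trace
          + α * (Bhat₁ᵀ * Matrix.diagonal τ * Bhat₁).trace
        ≤ (((U * B + E) - U * B')ᵀ * ((U * B + E) - U * B')).trace
          + α * (B'ᵀ * Matrix.diagonal τ * B').trace)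
    (hBhat₂ : ∀ B' : Matrix (Fin n) (Fin p) ℝ,
      (Θ * ((U * B + E) - U * Bhat₂)ᵀ * ((U * B + E) - U * Bhat₂)).trace
          + α * (Bhat₂ᵀ * Matrix.diagonal τ * Bhat₂).trace
        ≤ (Θ * ((U * B + E) - U * B')ᵀ * ((U * B + E) - U * B')).trace
          + α * (B'ᵀ * Matrix.diagonal τ * B').trace)
    (hW₂ : B - Bhat₂ ≠ 0) :
    ∃ Wtil : Matrix (Fin n) (Fin p) ℝ,
      (1 - ρ) / kbar ≤ maxAbsEntry Wtil / maxAbsEntry (B - Bhat₂) ∧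
      maxAbsEntry Wtil / maxAbsEntry (B - Bhat₂) ≤ (1 + ρ) * kbar ∧
      Wtil - (B - Bhat₁)
        = ((1 : Matrix (Fin n) (Fin n) ℝ) + α • Matrix.diagonal τ)⁻¹
            * (Uᵀ * E * ((1 : Matrix (Fin p) (Fin p) ℝ) - Θ)) := by
  have hkpos : (0:ℝ) < kbar := lt_of_lt_of_le one_pos hkbar
  have hΘjj : ∀ j, 0 < Θ j j := fun j =>
    lt_of_lt_of_le (by positivity) (hdiag j).1
  have hΘs : Θᵀ = Θ := by
    have h := hΘ.isHermitian
    simpa [Matrix.IsHermitian, Matrix.conjTranspose_eq_transpose_of_trivial] using h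
  set Λ := Matrix.diagonal τ with hΛ
  set X := U * B + E with hX
  set W₂ := B - Bhat₂ with hW₂def
  -- nonemptyness
  have hex : ∃ i j, W₂ i j ≠ 0 := by
    by_contra h
    push_neg at h
    exact hW₂ (by ext i j; simpa using h i j)
  obtain ⟨iw, jw, hw⟩ := hex
  haveI : Nonempty (Fin n) := ⟨iw⟩
  haveI : Nonempty (Fin p) := ⟨jw⟩
  set s := maxAbsEntry W₂ with hs
  have hWb : ∀ i k, |W₂ i k| ≤ s := fun i k => le_maxAbsEntry' W₂ i k
  have hspos : 0 < s := lt_of_lt_of_le (abs_pos.mpr hw) (hWb iw jw)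
  -- normal equations
  have heq1 : Uᵀ * (X - U * Bhat₁) * (1 : Matrix (Fin p) (Fin p) ℝ) = α • (Λ * Bhat₁) := by
    refine normal_eq U τ α X Bhat₁ 1 Matrix.transpose_one ?_
    intro B'
    simpa [Matrix.one_mul] using hBhat₁ B'
  have heq2 : Uᵀ * (X - U * Bhat₂) * Θ = α • (Λ * Bhat₂) :=
    normal_eq U τ α X Bhat₂ Θ hΘs hBhat₂
  have hUX : Uᵀ * X = B + Uᵀ * E := by
    rw [hX, Matrix.mul_add, ← Matrix.mul_assoc, hU, Matrix.one_mul]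
  have key1 : B + Uᵀ * E = Bhat₁ + α • (Λ * Bhat₁) := by
    rw [Matrix.mul_one, Matrix.mul_sub, ← Matrix.mul_assoc, hU, Matrix.one_mul, hUX,
      sub_eq_iff_eq_add] at heq1
    rw [heq1, add_comm]
  have key2 : (B + Uᵀ * E) * Θ = Bhat₂ * Θ + α • (Λ * Bhat₂) := by
    rw [Matrix.mul_sub, ← Matrix.mul_assoc, hU, Matrix.one_mul, hUX, Matrix.sub_mul,
      sub_eq_iff_eq_add] at heq2
    rw [heq2, add_comm]
  -- diagonal inverse
  set d : Fin n → ℝ := fun i => 1 + α * τ i with hd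
  have hdpos : ∀ i, 0 < d i := fun i => by
    have := mul_nonneg hα (hτ i); simp [hd]; linarith
  have hM : (1 : Matrix (Fin n) (Fin n) ℝ) + α • Λ = Matrix.diagonal d := by
    ext i j
    rcases eq_or_ne i j with rfl | h
    · simp [hΛ, hd, Matrix.diagonal_apply, Matrix.one_apply]
    · simp [hΛ, hd, Matrix.diagonal_apply_ne _ h, Matrix.one_apply_ne h]
  have hMM : Matrix.diagonal (fun i => (d i)⁻¹) * Matrix.diagonal d = 1 := by
    rw [Matrix.diagonal_mul_diagonal]
    have : (fun i => (d i)⁻¹ * d i) = fun _ => (1:ℝ) :=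
      funext fun i => inv_mul_cancel₀ (hdpos i).ne'
    rw [this]
    exact Matrix.diagonal_one
  have hMinv : ((1 : Matrix (Fin n) (Fin n) ℝ) + α • Λ)⁻¹
      = Matrix.diagonal (fun i => (d i)⁻¹) := by
    rw [hM]
    exact Matrix.inv_eq_left_inv hMM
  set W₁ := B - Bhat₁ with hW₁def
  set N := W₂ * Θ + α • (Λ * W₂) with hN
  set Wtil := Matrix.diagonal (fun i => (d i)⁻¹) * N with hWtil
  -- algebraic identities
  have claimN : N = α • (Λ * B) - Uᵀ * E * Θ := by
    rw [hN, hW₂def, Matrix.sub_mul, Matrix.mul_sub, smul_sub]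
    refine eq_of_sub_eq_sub' key2 ?_
    rw [Matrix.add_mul]
    abel
  have claimW1 : W₁ + α • (Λ * W₁) = α • (Λ * B) - Uᵀ * E := by
    rw [hW₁def, Matrix.mul_sub, smul_sub]
    refine eq_of_sub_eq_sub' key1 ?_
    abel
  have MW1 : Matrix.diagonal d * W₁ = α • (Λ * B) - Uᵀ * E := by
    rw [← hM, Matrix.add_mul, Matrix.one_mul, Matrix.smul_mul]
    exact claimW1
  have hW1eq : W₁ = Matrix.diagonal (fun i => (d i)⁻¹) * (α • (Λ * B) - Uᵀ * E) := by
    rw [← MW1, ← Matrix.mul_assoc, hMM, Matrix.one_mul]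
  -- third goal
  have goal3 : Wtil - W₁
      = ((1 : Matrix (Fin n) (Fin n) ℝ) + α • Λ)⁻¹
          * (Uᵀ * E * ((1 : Matrix (Fin p) (Fin p) ℝ) - Θ)) := by
    rw [hMinv, hWtil, hW1eq, ← Matrix.mul_sub]
    congr 1
    rw [claimN, Matrix.mul_sub, Matrix.mul_one]
    abel
  -- entry formula
  have hWtil_entry : ∀ i j, Wtil i j = (d i)⁻¹ * ((W₂ * Θ) i j + α * τ i * W₂ i j) := by
    intro i j
    rw [hWtil, Matrix.diagonal_mul]
    congr 1
    rw [hN]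
    simp [hΛ, Matrix.diagonal_mul, mul_assoc]
  -- upper bound on entries
  have hsum : ∀ i j, |(W₂ * Θ) i j| ≤ s * ((1 + ρ) * Θ j j) := by
    intro i j
    rw [Matrix.mul_apply]
    refine (Finset.abs_sum_le_sum_abs _ _).trans ?_
    have h1 : ∀ k ∈ Finset.univ, |W₂ i k * Θ k j| ≤ s * |Θ k j| := fun k _ => by
      rw [abs_mul]; exact mul_le_mul_of_nonneg_right (hWb i k) (abs_nonneg _)
    refine (Finset.sum_le_sum h1).trans ?_
    rw [← Finset.mul_sum]
    refine mul_le_mul_of_nonneg_left ?_ hspos.le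
    have hsplit : ∑ k, |Θ k j| = |Θ j j| + ∑ k ∈ Finset.univ.erase j, |Θ k j| :=
      (Finset.add_sum_erase Finset.univ _ (Finset.mem_univ j)).symm
    rw [hsplit, abs_of_pos (hΘjj j)]
    nlinarith [hdom j, hΘjj j]
  have hup : ∀ i j, |Wtil i j| ≤ (1 + ρ) * kbar * s := by
    intro i j
    rw [hWtil_entry i j, abs_mul, abs_of_pos (inv_pos.mpr (hdpos i))]
    have hinner : |(W₂ * Θ) i j + α * τ i * W₂ i j| ≤ d i * ((1 + ρ) * kbar * s) := by
      refine (abs_add_le _ _).trans ?_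
      have h2 : |α * τ i * W₂ i j| ≤ α * τ i * s := by
        rw [abs_mul, abs_of_nonneg (mul_nonneg hα (hτ i))]
        exact mul_le_mul_of_nonneg_left (hWb i j) (mul_nonneg hα (hτ i))
      have h3 := hsum i j
      have hθk : Θ j j ≤ kbar := (hdiag j).2
      have hr : 0 ≤ α * τ i := mul_nonneg hα (hτ i)
      have hdi : d i = 1 + α * τ i := rfl
      have hK : s ≤ (1 + ρ) * kbar * s := by
        have h1 : (1:ℝ) ≤ (1 + ρ) * kbar := by nlinarith
        calc s = 1 * s := (one_mul s).symm
          _ ≤ (1 + ρ) * kbar * s := mul_le_mul_of_nonneg_right h1 hspos.le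
      have hA : s * ((1 + ρ) * Θ j j) ≤ (1 + ρ) * kbar * s := by
        nlinarith [hspos.le, hθk, hρ₀]
      have hB : α * τ i * s ≤ α * τ i * ((1 + ρ) * kbar * s) :=
        mul_le_mul_of_nonneg_left hK hr
      rw [hdi]
      nlinarith [h2, h3, hA, hB]
    calc (d i)⁻¹ * |(W₂ * Θ) i j + α * τ i * W₂ i j|
        ≤ (d i)⁻¹ * (d i * ((1 + ρ) * kbar * s)) :=
          mul_le_mul_of_nonneg_left hinner (inv_pos.mpr (hdpos i)).le
      _ = (1 + ρ) * kbar * s := by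
          rw [← mul_assoc, inv_mul_cancel₀ (hdpos i).ne', one_mul]
  -- lower bound at the maximizing entry
  obtain ⟨⟨i0, j0⟩, h0⟩ := Finite.exists_max fun q : Fin n × Fin p => |W₂ q.1 q.2|
  have hmaxeq : s = |W₂ i0 j0| :=
    le_antisymm (maxAbsEntry_le' W₂ fun i j => h0 (i, j)) (hWb i0 j0)
  have hlow : (1 - ρ) / kbar * s ≤ |Wtil i0 j0| := by
    rw [hWtil_entry i0 j0]
    set e := ∑ k ∈ Finset.univ.erase j0, W₂ i0 k * Θ k j0 with he_def
    have hsplit : (W₂ * Θ) i0 j0 = W₂ i0 j0 * Θ j0 j0 + e := by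
      rw [Matrix.mul_apply]
      exact (Finset.add_sum_erase Finset.univ _ (Finset.mem_univ j0)).symm
    have he : |e| ≤ s * (ρ * Θ j0 j0) := by
      rw [he_def]
      refine (Finset.abs_sum_le_sum_abs _ _).trans ?_
      have h1 : ∀ k ∈ Finset.univ.erase j0, |W₂ i0 k * Θ k j0| ≤ s * |Θ k j0| := fun k _ => by
        rw [abs_mul]; exact mul_le_mul_of_nonneg_right (hWb i0 k) (abs_nonneg _)
      refine (Finset.sum_le_sum h1).trans ?_
      rw [← Finset.mul_sum]
      exact mul_le_mul_of_nonneg_left (hdom j0) hspos.le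
    set r := α * τ i0 with hr_def
    have hr : 0 ≤ r := mul_nonneg hα (hτ i0)
    set x := W₂ i0 j0 * (Θ j0 j0 + r) with hx_def
    have htotal : (W₂ * Θ) i0 j0 + r * W₂ i0 j0 = x + e := by
      rw [hsplit, hx_def]; ring
    have hxabs : |x| = s * (Θ j0 j0 + r) := by
      rw [hx_def, abs_mul, ← hmaxeq, abs_of_pos (by linarith [hΘjj j0] : (0:ℝ) < Θ j0 j0 + r)]
    have hlb : |x| - |e| ≤ |x + e| := by
      have h1 : |x| ≤ |x + e| + |e| := by
        calc |x| = |(x + e) + (-e)| := by ring_nf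
          _ ≤ |x + e| + |(-e)| := abs_add_le _ _
          _ = |x + e| + |e| := by rw [abs_neg]
      linarith
    have hkey : s * ((1 - ρ) * Θ j0 j0 + r) ≤ |x + e| := by
      rw [hxabs] at hlb
      nlinarith [he]
    have hdlb : (1 - ρ) / kbar * s * d i0 ≤ s * ((1 - ρ) * Θ j0 j0 + r) := by
      have h1 : (1 - ρ) / kbar ≤ (1 - ρ) * Θ j0 j0 := by
        have := (hdiag j0).1
        have h1ρ : (0:ℝ) ≤ 1 - ρ := by linarith
        calc (1 - ρ) / kbar = (1 - ρ) * (1 / kbar) := by ring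
          _ ≤ (1 - ρ) * Θ j0 j0 := mul_le_mul_of_nonneg_left this h1ρ
      have h2 : (1 - ρ) / kbar ≤ 1 := by
        rw [div_le_one hkpos]; linarith
      have hdi : d i0 = 1 + r := rfl
      rw [hdi]
      nlinarith [hspos.le, mul_le_mul_of_nonneg_left h1 hspos.le,
        mul_le_mul_of_nonneg_right h2 hr, hspos]
    rw [abs_mul, abs_of_pos (inv_pos.mpr (hdpos i0))]
    have := htotal ▸ hkey
    calc (1 - ρ) / kbar * s = (d i0)⁻¹ * ((1 - ρ) / kbar * s * d i0) := by
          have := (hdpos i0).ne'; field_simp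
      _ ≤ (d i0)⁻¹ * |(W₂ * Θ) i0 j0 + r * W₂ i0 j0| :=
          mul_le_mul_of_nonneg_left (hdlb.trans this) (inv_pos.mpr (hdpos i0)).le
  refine ⟨Wtil, ?_, ?_, goal3⟩
  · rw [le_div_iff₀ hspos]
    exact hlow.trans (le_maxAbsEntry' Wtil i0 j0)
  · rw [div_le_iff₀ hspos]
    exact maxAbsEntry_le' Wtil hup
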